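/- Let f : ℝ^{n×p} → ℝ be continuously differentiable, let X ∈ ℝ^{n×p} satisfy σ_min(X) > 0, let δ > 0, and suppose β > (‖∇f(X)‖₂·‖X‖₂ + δ)/σ_min(X)². If ∇_X L_β(X, Λ) = 0 with Λ = Ψ(∇f(X)ᵀX), then X is a first-order stationary point of problem (P), i.e. XᵀX = I_p and ∇f(X) − X∇f(X)ᵀX = 0. -/

import Mathlib

open Matrix

attribute [local instance] Matrix.frobeniusNormedAddCommGroup Matrix.frobeniusNormedSpace

/-- Spectral norm (largest singular value) of a real matrix. -/
noncomputable def specNorm {n p : ℕ} (A : Matrix (Fin n) (Fin p) ℝ) : ℝ :=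
  ⨆ v : Metric.sphere (0 : EuclideanSpace ℝ (Fin p)) 1, ‖Matrix.toEuclideanLin A v.1‖

/-- Smallest singular value of a real matrix. -/
noncomputable def sigmaMin {n p : ℕ} (A : Matrix (Fin n) (Fin p) ℝ) : ℝ :=
  ⨅ v : Metric.sphere (0 : EuclideanSpace ℝ (Fin p)) 1, ‖Matrix.toEuclideanLin A v.1‖

lemma dot_eq_inner_aux {m : ℕ} (y z : Fin m → ℝ) :
    y ⬝ᵥ z = inner ℝ ((WithLp.equiv 2 (Fin m → ℝ)).symm y) ((WithLp.equiv 2 (Fin m → ℝ)).symm z) := by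
  simp [PiLp.inner_apply, RCLike.inner_apply, dotProduct, mul_comm]

lemma dot_mulVec_transpose_aux {n p : ℕ} (A : Matrix (Fin n) (Fin p) ℝ)
    (a : Fin p → ℝ) (b : Fin n → ℝ) : a ⬝ᵥ (Aᵀ *ᵥ b) = (A *ᵥ a) ⬝ᵥ b := by
  rw [Matrix.dotProduct_mulVec, Matrix.vecMul_transpose]

/-- Lemma 2 of the paper, second part: if `σ_min(X) > 0`, `δ > 0`,
`β > (‖∇f(X)‖₂‖X‖₂ + δ)/σ_min(X)²` and `∇_X L_β(X, Λ) = 0` with `Λ = Ψ(∇f(X)ᵀX)`,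
then `X` is a first-order stationary point of problem (P):
`XᵀX = I_p` and `∇f(X) − X∇f(X)ᵀX = 0`. -/
theorem stmt5 {n p : ℕ} (f : Matrix (Fin n) (Fin p) ℝ → ℝ)
    (hf : ContDiff ℝ 1 f)
    (X G : Matrix (Fin n) (Fin p) ℝ)
    (hG : ∀ H, fderiv ℝ f X H = Matrix.trace (Gᵀ * H))
    (δ β : ℝ) (hδ : 0 < δ)
    (hσ : 0 < sigmaMin X)
    (hβ : β > (specNorm G * specNorm X + δ) / (sigmaMin X) ^ 2)
    (hzero : G - X * ((1 / 2 : ℝ) • (Gᵀ * X + (Gᵀ * X)ᵀ)) + β • (X * (Xᵀ * X - 1)) = 0) :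
    Xᵀ * X = 1 ∧ G - X * Gᵀ * X = 0 := by
  classical
  set Λ : Matrix (Fin p) (Fin p) ℝ := (1 / 2 : ℝ) • (Gᵀ * X + (Gᵀ * X)ᵀ) with hΛ
  set M : Matrix (Fin p) (Fin p) ℝ := Xᵀ * X with hM
  set C : Matrix (Fin p) (Fin p) ℝ := M - 1 with hC
  have hΛ2 : Λ = (1 / 2 : ℝ) • (Gᵀ * X + Xᵀ * G) := by
    rw [hΛ, Matrix.transpose_mul, Matrix.transpose_transpose]
  have hCsym : Cᵀ = C := by
    rw [hC, Matrix.transpose_sub, Matrix.transpose_one, hM, Matrix.transpose_mul,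
      Matrix.transpose_transpose]
  -- Step 1: basic consequences of hzero
  have Eq1 : β • (X * C) = X * Λ - G := by
    have h := eq_neg_of_add_eq_zero_right hzero
    rw [h, neg_sub]
  have Eq2 : β • (M * C) = M * Λ - Xᵀ * G := by
    have h := congrArg (fun Y => Xᵀ * Y) Eq1
    simp only [Matrix.mul_smul, Matrix.mul_sub, ← Matrix.mul_assoc] at h
    rw [hM]
    exact h
  -- Step 2: trace identity
  have T0 : Matrix.trace (C * ((β • M - Λ) * C)) = 0 := by
    rw [Matrix.trace_mul_comm]
    -- trace (((β•M - Λ) * C) * C) = 0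
    rw [Matrix.sub_mul, Matrix.sub_mul, Matrix.trace_sub]
    have e2 : β • M * C = β • (M * C) := Matrix.smul_mul β M C
    rw [e2, Eq2, Matrix.sub_mul, Matrix.trace_sub]
    have hMC : M = C + 1 := by rw [hC, sub_add_cancel]
    have t2 : Matrix.trace (M * Λ * C) = Matrix.trace (Λ * C * C) + Matrix.trace (Λ * C) := by
      rw [Matrix.mul_assoc, Matrix.trace_mul_comm]
      rw [hMC, Matrix.mul_add, Matrix.trace_add, Matrix.mul_one]
    have t1 : Matrix.trace (Λ * C) = Matrix.trace (Xᵀ * G * C) := by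
      have h3 : Matrix.trace (Gᵀ * X * C) = Matrix.trace (Xᵀ * G * C) := by
        conv_lhs => rw [← Matrix.trace_transpose]
        rw [Matrix.transpose_mul, hCsym, Matrix.transpose_mul, Matrix.transpose_transpose,
          Matrix.trace_mul_comm]
      rw [hΛ2, Matrix.smul_mul, Matrix.trace_smul, Matrix.add_mul, Matrix.trace_add, h3,
        smul_eq_mul]
      ring
    linarith [t1, t2]
  -- Step 3: quadratic-form lower bound
  have hA : ∀ v : Fin p → ℝ, δ * (v ⬝ᵥ v) ≤ v ⬝ᵥ ((β • M - Λ) *ᵥ v) := by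
    intro v
    by_cases hv : v = 0
    · simp [hv]
    · set w : EuclideanSpace ℝ (Fin p) := (WithLp.equiv 2 (Fin p → ℝ)).symm v with hw
      have hwne : w ≠ 0 := by
        intro h
        apply hv
        have := congrArg (WithLp.equiv 2 (Fin p → ℝ)) h
        simpa [hw] using this
      have hnw : 0 < ‖w‖ := norm_pos_iff.mpr hwne
      set u : EuclideanSpace ℝ (Fin p) := ‖w‖⁻¹ • w with hu
      have hun : ‖u‖ = 1 := norm_smul_inv_norm hwne
      set s : Metric.sphere (0 : EuclideanSpace ℝ (Fin p)) 1 :=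
        ⟨u, mem_sphere_zero_iff_norm.mpr hun⟩ with hs
      have hbddB : BddBelow (Set.range fun t : Metric.sphere (0 : EuclideanSpace ℝ (Fin p)) 1 =>
          ‖Matrix.toEuclideanLin X t.1‖) := by
        refine ⟨0, ?_⟩
        rintro x ⟨t, rfl⟩
        exact norm_nonneg _
      have hbddA : ∀ (A : Matrix (Fin n) (Fin p) ℝ),
          BddAbove (Set.range fun t : Metric.sphere (0 : EuclideanSpace ℝ (Fin p)) 1 =>
          ‖Matrix.toEuclideanLin A t.1‖) := by
        intro A
        have hc : Continuous fun t : EuclideanSpace ℝ (Fin p) => ‖Matrix.toEuclideanLin A t‖ :=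
          (LinearMap.continuous_of_finiteDimensional (Matrix.toEuclideanLin A)).norm
        have hcomp := (isCompact_sphere (0 : EuclideanSpace ℝ (Fin p)) 1).bddAbove_image
          hc.continuousOn
        rwa [Set.image_eq_range] at hcomp
      have hσle : sigmaMin X ≤ ‖Matrix.toEuclideanLin X u‖ := by
        have := ciInf_le hbddB s
        simpa [sigmaMin] using this
      have hGle : ‖Matrix.toEuclideanLin G u‖ ≤ specNorm G := by
        have := le_ciSup (hbddA G) s
        simpa [specNorm] using this
      have hXle : ‖Matrix.toEuclideanLin X u‖ ≤ specNorm X := by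
        have := le_ciSup (hbddA X) s
        simpa [specNorm] using this
      have hGnn : 0 ≤ specNorm G := le_trans (norm_nonneg _) hGle
      have hXnn : 0 ≤ specNorm X := le_trans (norm_nonneg _) hXle
      -- the vector underlying u
      set uv : Fin p → ℝ := WithLp.equiv 2 (Fin p → ℝ) u with huv
      have hXu : X *ᵥ uv = WithLp.equiv 2 (Fin n → ℝ) (Matrix.toEuclideanLin X u) := by
        rw [huv]; rfl
      have hGu : G *ᵥ uv = WithLp.equiv 2 (Fin n → ℝ) (Matrix.toEuclideanLin G u) := by
        rw [huv]; rfl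
      have qM : uv ⬝ᵥ (M *ᵥ uv) = ‖Matrix.toEuclideanLin X u‖ ^ 2 := by
        rw [hM, ← Matrix.mulVec_mulVec, dot_mulVec_transpose_aux, hXu, dot_eq_inner_aux]
        simp only [Equiv.symm_apply_apply, real_inner_self_eq_norm_sq]
      have qΛ : uv ⬝ᵥ (Λ *ᵥ uv) =
          inner ℝ (Matrix.toEuclideanLin G u) (Matrix.toEuclideanLin X u) := by
        rw [hΛ2, Matrix.smul_mulVec, dotProduct_smul, Matrix.add_mulVec,
          dotProduct_add, ← Matrix.mulVec_mulVec, ← Matrix.mulVec_mulVec,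
          dot_mulVec_transpose_aux, dot_mulVec_transpose_aux, dotProduct_comm (X *ᵥ uv)]
        rw [hXu, hGu, dot_eq_inner_aux]
        simp only [Equiv.symm_apply_apply, smul_eq_mul]
        ring
      have huu : uv ⬝ᵥ uv = 1 := by
        rw [huv, dot_eq_inner_aux]
        simp only [Equiv.symm_apply_apply, real_inner_self_eq_norm_sq, hun]
        norm_num
      have qA : uv ⬝ᵥ ((β • M - Λ) *ᵥ uv) = β * ‖Matrix.toEuclideanLin X u‖ ^ 2 -
          inner ℝ (Matrix.toEuclideanLin G u) (Matrix.toEuclideanLin X u) := by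
        rw [Matrix.sub_mulVec, dotProduct_sub, Matrix.smul_mulVec,
          dotProduct_smul, qM, qΛ, smul_eq_mul]
      have hβσ : specNorm G * specNorm X + δ < β * sigmaMin X ^ 2 := by
        have := (div_lt_iff₀ (pow_pos hσ 2)).mp hβ
        linarith
      have hβpos : 0 < β := by
        by_contra h
        push_neg at h
        have h1 : β * sigmaMin X ^ 2 ≤ 0 := mul_nonpos_of_nonpos_of_nonneg h (sq_nonneg _)
        have h2 : 0 ≤ specNorm G * specNorm X := mul_nonneg hGnn hXnn
        linarith
      have hinner : inner ℝ (Matrix.toEuclideanLin G u) (Matrix.toEuclideanLin X u) ≤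
          specNorm G * specNorm X :=
        le_trans (real_inner_le_norm _ _)
          (mul_le_mul hGle hXle (norm_nonneg _) hGnn)
      have hqbound : δ ≤ uv ⬝ᵥ ((β • M - Λ) *ᵥ uv) := by
        rw [qA]
        have h1 : sigmaMin X ^ 2 ≤ ‖Matrix.toEuclideanLin X u‖ ^ 2 :=
          pow_le_pow_left₀ hσ.le hσle 2
        have h2 := mul_le_mul_of_nonneg_left h1 hβpos.le
        linarith
      -- scale back
      have hveq : v = ‖w‖ • uv := by
        rw [huv, hu]
        simp [smul_smul, mul_inv_cancel₀ hnw.ne', hw]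
        rw [mul_inv_cancel₀ (show ‖WithLp.toLp 2 v‖ ≠ 0 from hnw.ne'), one_smul]
      have e1 : v ⬝ᵥ v = ‖w‖ * ‖w‖ := by
        rw [hveq, smul_dotProduct, dotProduct_smul, huu, smul_eq_mul, smul_eq_mul]
        ring
      have e2 : v ⬝ᵥ ((β • M - Λ) *ᵥ v) = ‖w‖ * (‖w‖ * (uv ⬝ᵥ ((β • M - Λ) *ᵥ uv))) := by
        rw [hveq, Matrix.mulVec_smul, smul_dotProduct, dotProduct_smul,
          smul_eq_mul, smul_eq_mul]
      rw [e1, e2]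
      have hcc : 0 ≤ ‖w‖ * ‖w‖ := (mul_pos hnw hnw).le
      calc δ * (‖w‖ * ‖w‖) ≤ (uv ⬝ᵥ ((β • M - Λ) *ᵥ uv)) * (‖w‖ * ‖w‖) :=
            mul_le_mul_of_nonneg_right hqbound hcc
        _ = ‖w‖ * (‖w‖ * (uv ⬝ᵥ ((β • M - Λ) *ᵥ uv))) := by ring
  -- Step 4: conclude C = 0
  have expand : ∀ j, (C * ((β • M - Λ) * C)) j j =
      (fun i => C i j) ⬝ᵥ ((β • M - Λ) *ᵥ (fun i => C i j)) := by
    intro j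
    have hsym : ∀ i, C j i = C i j := by
      intro i
      rw [← Matrix.transpose_apply C i j, hCsym]
    simp only [Matrix.mul_apply, Matrix.mulVec, dotProduct]
    exact Finset.sum_congr rfl fun i _ => by rw [hsym i]
  have tsum : Matrix.trace (C * ((β • M - Λ) * C)) =
      ∑ j, (fun i => C i j) ⬝ᵥ ((β • M - Λ) *ᵥ (fun i => C i j)) := by
    rw [Matrix.trace]
    exact Finset.sum_congr rfl fun j _ => expand j
  have dotnn : ∀ j : Fin p, 0 ≤ (fun i => C i j) ⬝ᵥ (fun i => C i j) := by
    intro j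
    simp only [dotProduct]
    exact Finset.sum_nonneg fun i _ => mul_self_nonneg _
  have hsum : δ * ∑ j, ((fun i => C i j) ⬝ᵥ (fun i => C i j)) ≤ 0 := by
    rw [Finset.mul_sum]
    calc ∑ j, δ * ((fun i => C i j) ⬝ᵥ (fun i => C i j))
        ≤ ∑ j, (fun i => C i j) ⬝ᵥ ((β • M - Λ) *ᵥ (fun i => C i j)) :=
          Finset.sum_le_sum fun j _ => hA _
      _ = 0 := by rw [← tsum, T0]
  have hS0 : ∑ j, ((fun i => C i j) ⬝ᵥ (fun i => C i j)) = 0 := by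
    have hnn : 0 ≤ ∑ j, ((fun i => C i j) ⬝ᵥ (fun i => C i j)) :=
      Finset.sum_nonneg fun j _ => dotnn j
    have h1 : ¬(0 < ∑ j, ((fun i => C i j) ⬝ᵥ (fun i => C i j))) := fun hpos =>
      absurd hsum (not_le.mpr (mul_pos hδ hpos))
    exact le_antisymm (not_lt.mp h1) hnn
  have hz : ∀ j, (fun i => C i j) ⬝ᵥ (fun i => C i j) = 0 := by
    intro j
    exact (Finset.sum_eq_zero_iff_of_nonneg fun j _ => dotnn j).mp hS0 j (Finset.mem_univ j)
  have hC0 : C = 0 := by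
    ext i j
    have h1 := hz j
    simp only [dotProduct] at h1
    have h2 := (Finset.sum_eq_zero_iff_of_nonneg fun i _ => mul_self_nonneg (C i j)).mp h1 i
      (Finset.mem_univ i)
    simpa [mul_self_eq_zero] using h2
  have hM1 : M = 1 := by
    have h := hC0
    rw [hC] at h
    exact sub_eq_zero.mp h
  constructor
  · exact hM1
  · -- second part
    rw [hC0] at hzero
    simp only [Matrix.mul_zero, smul_zero, add_zero] at hzero
    have hG2 : G = X * Λ := sub_eq_zero.mp hzero
    have hΛsym : Λᵀ = Λ := by
      rw [hΛ, Matrix.transpose_smul, Matrix.transpose_add, Matrix.transpose_transpose,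
        add_comm]
    have hGtX : Gᵀ * X = Λ := by
      rw [hG2, Matrix.transpose_mul, hΛsym, Matrix.mul_assoc, ← hM, hM1, Matrix.mul_one]
    rw [Matrix.mul_assoc, hGtX, ← hG2, sub_self]
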